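/- Assume the highest root θ is fundamental, let α_θ be the unique simple root with (θ, α_θ) ≠ 0, let S_1 be the set of simple roots adjacent to α_θ, and let S_2 = S_1 ∪ {α_θ}. Then S_1 ≠ S_2, d(S_1) = 3, d(S_2) = 5, and I_{S_1} = I_{S_2}, i.e., {γ ∈ Δ⁺ : deg_{S_1}(γ) ≥ 2} = {γ ∈ Δ⁺ : deg_{S_2}(γ) ≥ 3}. In particular, when θ is fundamental the map S ↦ I_S (equivalently, the map f_2 from standard parabolic subalgebras to abelian ideals) is not injective. -/

import Mathlib

open scoped InnerProductSpace

/-- An irreducible reduced crystallographic root system, spanning a finite-dimensional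
real inner product space, together with a fixed base (set of simple roots) and the
coefficient function expressing each root in the base. -/
structure RootSystemData (V : Type) [NormedAddCommGroup V] [InnerProductSpace ℝ V]
    [FiniteDimensional ℝ V] where
  roots : Set V
  finite : roots.Finite
  nonzero : ∀ γ ∈ roots, γ ≠ 0
  spans : Submodule.span ℝ roots = ⊤
  reflClosed : ∀ α ∈ roots, ∀ β ∈ roots, β - (2 * ⟪β, α⟫_ℝ / ⟪α, α⟫_ℝ) • α ∈ roots
  crystal : ∀ α ∈ roots, ∀ β ∈ roots, ∃ k : ℤ, 2 * ⟪β, α⟫_ℝ / ⟪α, α⟫_ℝ = (k : ℝ)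
  reduced : ∀ α ∈ roots, ∀ t : ℝ, t • α ∈ roots → t = 1 ∨ t = -1
  irred : ∀ A B : Set V, roots = A ∪ B → (∀ a ∈ A, ∀ b ∈ B, ⟪a, b⟫_ℝ = 0) →
    A = ∅ ∨ B = ∅
  simples : Finset V
  simples_sub : ↑simples ⊆ roots
  simples_indep : LinearIndependent ℝ (Subtype.val : {x : V // x ∈ simples} → V)
  coeff : V → V → ℤ
  coeff_spec : ∀ γ ∈ roots, γ = ∑ α ∈ simples, coeff γ α • α
  coeff_sign : ∀ γ ∈ roots, (∀ α ∈ simples, 0 ≤ coeff γ α) ∨ (∀ α ∈ simples, coeff γ α ≤ 0)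

namespace RootSystemData

variable {V : Type} [NormedAddCommGroup V] [InnerProductSpace ℝ V] [FiniteDimensional ℝ V]
variable (R : RootSystemData V)

/-- The set of positive roots `Δ⁺` (w.r.t. the base `simples`). -/
def posRoots : Set V := {γ | γ ∈ R.roots ∧ ∀ α ∈ R.simples, 0 ≤ R.coeff γ α}

/-- The partial order `μ ≼ ν`: `ν - μ` is a nonnegative integral combination of simple roots. -/
def rle (μ ν : V) : Prop := ∃ c : V → ℕ, ν - μ = ∑ α ∈ R.simples, (c α : ℤ) • α

/-- `θ` is the highest root. -/
def IsHighest (θ : V) : Prop := θ ∈ R.posRoots ∧ ∀ γ ∈ R.roots, R.rle γ θ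

/-- `γ` is a long root: a root of maximal length. -/
def IsLong (γ : V) : Prop := γ ∈ R.roots ∧ ∀ γ' ∈ R.roots, ‖γ'‖ ≤ ‖γ‖

/-- `I` is an upper ideal of `(Δ⁺, ≼)`. -/
def IsUpperIdeal (I : Set V) : Prop :=
  I ⊆ R.posRoots ∧ ∀ ν ∈ I, ∀ γ ∈ R.posRoots, R.rle ν γ → γ ∈ I

/-- `I` is an abelian upper ideal of `(Δ⁺, ≼)`. -/
def IsAbelianIdeal (I : Set V) : Prop :=
  R.IsUpperIdeal I ∧ ∀ γ₁ ∈ I, ∀ γ₂ ∈ I, γ₁ + γ₂ ∉ R.roots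

/-- The set of minimal elements of `M ⊆ Δ⁺` w.r.t. `≼`. -/
def minSet (M : Set V) : Set V := {γ | γ ∈ M ∧ ∀ ν ∈ M, R.rle ν γ → ν = γ}

/-- The set of maximal elements of `M ⊆ Δ⁺` w.r.t. `≼`. -/
def maxSet (M : Set V) : Set V := {γ | γ ∈ M ∧ ∀ ν ∈ M, R.rle γ ν → ν = γ}

/-- `S(I) = {α ∈ Π : ∃ γ ∈ min(I), γ - α ∈ Δ⁺ ∪ {0}}`; the complement `Π ∖ S(I)` is the
set of simple roots of the standard Levi subalgebra of the normaliser of the ideal `I`. -/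
def normS (I : Set V) : Set V :=
  {α | α ∈ R.simples ∧ ∃ γ ∈ R.minSet I, (γ - α ∈ R.posRoots ∨ γ = α)}

/-- `H = {γ ∈ Δ⁺ : (γ, θ) ≠ 0}`. -/
def Hset (θ : V) : Set V := {γ | γ ∈ R.posRoots ∧ ⟪γ, θ⟫_ℝ ≠ 0}

/-- `deg_S(γ) = Σ_{α ∈ S} [γ:α]`. -/
def degS (S : Finset V) (γ : V) : ℤ := ∑ α ∈ S, R.coeff γ α

/-- `I_S = {γ ∈ Δ⁺ : deg_S(γ) ≥ ⌊d(S)/2⌋ + 1}`, where `d(S) = deg_S(θ)`: the abelian ideal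
`g(≥ ⌊hot(p)/2⌋ + 1)` associated with the standard parabolic subalgebra `p(S)`. -/
def idealS (S : Finset V) (θ : V) : Set V :=
  {γ | γ ∈ R.posRoots ∧ R.degS S θ / 2 + 1 ≤ R.degS S γ}

/-- The highest root `θ` is fundamental with `α_θ` the unique simple root not
orthogonal to `θ`, and `(θ, α_θ∨) = 1`. -/
def IsFundamental (θ αθ : V) : Prop :=
  αθ ∈ R.simples ∧ ⟪θ, αθ⟫_ℝ ≠ 0 ∧ (∀ β ∈ R.simples, ⟪θ, β⟫_ℝ ≠ 0 → β = αθ) ∧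
    2 * ⟪θ, αθ⟫_ℝ / ⟪αθ, αθ⟫_ℝ = 1

end RootSystemData

/-- The reflection `s_α`. -/
noncomputable def rsRefl {V : Type} [NormedAddCommGroup V] [InnerProductSpace ℝ V] (α x : V) : V :=
  x - (2 * ⟪x, α⟫_ℝ / ⟪α, α⟫_ℝ) • α

/-- The element of the Weyl group given by the word `l = [α₁, …, α_m]`,
namely `s_{α₁} ∘ ⋯ ∘ s_{α_m}`; its inverse is `wordMap l.reverse`. -/
noncomputable def wordMap {V : Type} [NormedAddCommGroup V] [InnerProductSpace ℝ V] (l : List V) : V → V :=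
  l.foldr (fun α f => rsRefl α ∘ f) id

section Aux
variable {V : Type} [NormedAddCommGroup V] [InnerProductSpace ℝ V] [FiniteDimensional ℝ V]
variable (R : RootSystemData V)

lemma aux_ext {f g : V → ℝ}
    (h : ∑ α ∈ R.simples, f α • α = ∑ α ∈ R.simples, g α • α) :
    ∀ α ∈ R.simples, f α = g α := by
  have h0 : ∑ α ∈ R.simples, (f α - g α) • α = 0 := by
    simp only [sub_smul, Finset.sum_sub_distrib, h, sub_self]
  have h2 := Fintype.linearIndependent_iff.mp R.simples_indep
    (fun i : {x : V // x ∈ R.simples} => f i.val - g i.val)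
  rw [Finset.sum_coe_sort R.simples (fun a => (f a - g a) • a)] at h2
  intro α hα
  have := h2 h0 ⟨α, hα⟩
  simpa [sub_eq_zero] using this

lemma aux_pos {γ : V} (h : γ ≠ 0) : 0 < ⟪γ, γ⟫_ℝ :=
  lt_of_not_ge fun hle => h (real_inner_self_nonpos.mp hle)

lemma aux_spec {γ : V} (hγ : γ ∈ R.roots) :
    γ = ∑ α ∈ R.simples, ((R.coeff γ α : ℝ)) • α := by
  conv_lhs => rw [R.coeff_spec γ hγ]
  exact Finset.sum_congr rfl fun α _ => (Int.cast_smul_eq_zsmul ℝ _ _).symm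

lemma aux_coeff_eq {γ : V} (hγ : γ ∈ R.roots) (d : V → ℝ)
    (h : γ = ∑ α ∈ R.simples, d α • α) : ∀ α ∈ R.simples, (R.coeff γ α : ℝ) = d α :=
  aux_ext R ((aux_spec R hγ).symm.trans h)

lemma aux_inner {γ : V} (hγ : γ ∈ R.roots) (x : V) :
    ⟪γ, x⟫_ℝ = ∑ α ∈ R.simples, (R.coeff γ α : ℝ) * ⟪α, x⟫_ℝ := by
  conv_lhs => rw [aux_spec R hγ]
  rw [sum_inner]
  exact Finset.sum_congr rfl fun α _ => real_inner_smul_left _ _ _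

lemma aux_neg {γ : V} (hγ : γ ∈ R.roots) : -γ ∈ R.roots := by
  have h := R.reflClosed γ hγ γ hγ
  have hne : ⟪γ, γ⟫_ℝ ≠ 0 := by
    simpa [inner_self_eq_zero] using R.nonzero γ hγ
  have h2 : 2 * ⟪γ, γ⟫_ℝ / ⟪γ, γ⟫_ℝ = 2 := by field_simp
  rw [h2] at h
  have : γ - (2:ℝ) • γ = -γ := by
    rw [two_smul]; abel
  rwa [this] at h

lemma aux_coeff_neg {γ : V} (hγ : γ ∈ R.roots) :
    ∀ α ∈ R.simples, (R.coeff (-γ) α : ℝ) = -(R.coeff γ α : ℝ) := by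
  apply aux_coeff_eq R (aux_neg R hγ)
  conv_lhs => rw [aux_spec R hγ]
  simp [Finset.sum_neg_distrib, neg_smul]

lemma aux_coeff_sub_smul {γ δ : V} (hγ : γ ∈ R.roots) (hδ : δ ∈ R.roots) (t : ℝ)
    (hmem : γ - t • δ ∈ R.roots) :
    ∀ α ∈ R.simples, (R.coeff (γ - t • δ) α : ℝ) = (R.coeff γ α : ℝ) - t * (R.coeff δ α : ℝ) := by
  apply aux_coeff_eq R hmem
  conv_lhs => rw [aux_spec R hγ, aux_spec R hδ]
  rw [Finset.smul_sum, ← Finset.sum_sub_distrib]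
  exact Finset.sum_congr rfl fun α _ => by rw [sub_smul, smul_smul]

open Classical in
lemma aux_simple_coeff {s : V} (hs : s ∈ R.simples) :
    ∀ α ∈ R.simples, (R.coeff s α : ℝ) = if α = s then 1 else 0 := by
  apply aux_coeff_eq R (R.simples_sub hs)
  rw [Finset.sum_congr rfl (fun α _ => by rw [ite_smul, one_smul, zero_smul]),
    Finset.sum_ite_eq' R.simples s (fun α => α)]
  simp [hs]

end Aux

/-- Theorem 4.4(ii): if `θ` is fundamental, `S₁` is the set of simple
roots adjacent to `α_θ` and `S₂ = S₁ ∪ {α_θ}`, then `S₁ ≠ S₂`, `d(S₁) = 3`, `d(S₂) = 5`,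
and `I_{S₁} = I_{S₂}`, i.e.
`{γ ∈ Δ⁺ : deg_{S₁}(γ) ≥ 2} = {γ ∈ Δ⁺ : deg_{S₂}(γ) ≥ 3}`; in particular `S ↦ I_S`
is not injective. -/


theorem stmt16 {V : Type} [NormedAddCommGroup V] [InnerProductSpace ℝ V] [FiniteDimensional ℝ V]
    (R : RootSystemData V) (θ αθ : V) (hθ : R.IsHighest θ)
    (hfund : R.IsFundamental θ αθ)
    (S₁ : Finset V)
    (hS₁ : (↑S₁ : Set V) = {β : V | β ∈ R.simples ∧ β ≠ αθ ∧ ⟪β, αθ⟫_ℝ ≠ 0})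
    (S₂ : Finset V) (hS₂ : (↑S₂ : Set V) = insert αθ ↑S₁) :
    S₁ ≠ S₂ ∧ R.degS S₁ θ = 3 ∧ R.degS S₂ θ = 5 ∧
      {γ : V | γ ∈ R.posRoots ∧ 2 ≤ R.degS S₁ γ}
        = {γ : V | γ ∈ R.posRoots ∧ 3 ≤ R.degS S₂ γ} := by
  classical
  obtain ⟨hθpos, hθmax⟩ := hθ
  obtain ⟨hθroots, hθnn⟩ := hθpos
  obtain ⟨hαθPi, hθαθ0, huniq, hfe⟩ := hfund
  have hαθroots : αθ ∈ R.roots := R.simples_sub hαθPi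
  have hA : 0 < ⟪αθ, αθ⟫_ℝ := aux_pos (R.nonzero αθ hαθroots)
  have hp : ⟪θ, αθ⟫_ℝ = ⟪αθ, αθ⟫_ℝ / 2 := by
    have h := hfe
    field_simp at h
    linarith
  have horth : ∀ β ∈ R.simples, β ≠ αθ → ⟪β, θ⟫_ℝ = 0 := by
    intro β hβ hne
    by_contra h
    exact hne (huniq β hβ (by rwa [real_inner_comm] at h))
  have hS₁mem : ∀ β : V, β ∈ S₁ ↔ (β ∈ R.simples ∧ β ≠ αθ ∧ ⟪β, αθ⟫_ℝ ≠ 0) := by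
    intro β
    have := Set.ext_iff.mp hS₁ β
    simpa using this
  have hS₁sub : S₁ ⊆ R.simples := fun β hβ => ((hS₁mem β).mp hβ).1
  have hαθS₁ : αθ ∉ S₁ := fun h => ((hS₁mem αθ).mp h).2.1 rfl
  have hS₂fin : S₂ = insert αθ S₁ := Finset.coe_injective (by rw [hS₂, Finset.coe_insert])
  -- coefficient domination by θ
  have hdom : ∀ γ ∈ R.roots, ∀ α ∈ R.simples, (R.coeff γ α : ℝ) ≤ (R.coeff θ α : ℝ) := by
    intro γ hγ
    obtain ⟨c, hc⟩ := hθmax γ hγ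
    have hc' : θ = ∑ α ∈ R.simples, ((R.coeff γ α : ℝ) + (c α : ℝ)) • α := by
      have h2 : θ - γ = ∑ α ∈ R.simples, ((c α : ℝ)) • α := by
        rw [hc]
        exact Finset.sum_congr rfl fun α _ => by
          rw [← Int.cast_smul_eq_zsmul ℝ]; norm_num
      have h1 : θ = γ + ∑ α ∈ R.simples, ((c α : ℝ)) • α := by
        rw [← h2]; abel
      conv_lhs => rw [h1, aux_spec R hγ]
      rw [← Finset.sum_add_distrib]
      exact Finset.sum_congr rfl fun α _ => (add_smul _ _ _).symm
    intro α hα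
    have h3 := aux_coeff_eq R hθroots _ hc' α hα
    have hc0 : (0:ℝ) ≤ (c α : ℝ) := Nat.cast_nonneg _
    linarith
  -- inner products with θ
  have hiθ : ∀ γ ∈ R.roots, ⟪γ, θ⟫_ℝ = (R.coeff γ αθ : ℝ) * (⟪αθ, αθ⟫_ℝ / 2) := by
    intro γ hγ
    rw [aux_inner R hγ θ,
      Finset.sum_eq_single_of_mem αθ hαθPi (fun β hβ hne => by rw [horth β hβ hne, mul_zero]),
      real_inner_comm, hp]
  have hθθ : ⟪θ, θ⟫_ℝ = (R.coeff θ αθ : ℝ) * (⟪αθ, αθ⟫_ℝ / 2) := hiθ θ hθroots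
  have hT : 0 < ⟪θ, θ⟫_ℝ := aux_pos (R.nonzero θ hθroots)
  -- the coefficient of αθ in θ is 2
  have hc2 : R.coeff θ αθ = 2 := by
    obtain ⟨k, hk⟩ := R.crystal θ hθroots αθ hαθroots
    -- hk : 2 * ⟪αθ, θ⟫_ℝ / ⟪θ, θ⟫_ℝ = k
    have hkval : (R.coeff θ αθ : ℝ) * (k : ℝ) = 2 := by
      have h1 : 2 * ⟪αθ, θ⟫_ℝ = (k : ℝ) * ⟪θ, θ⟫_ℝ := by
        field_simp at hk
        linarith
      rw [real_inner_comm, hp, hθθ] at h1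
      have h2 : ⟪αθ, αθ⟫_ℝ * ((R.coeff θ αθ : ℝ) * (k : ℝ)) = ⟪αθ, αθ⟫_ℝ * 2 := by
        ring_nf at h1 ⊢
        linarith
      exact mul_left_cancel₀ (ne_of_gt hA) h2
    have hcpos : 0 < R.coeff θ αθ := by
      have h3 : 0 < (R.coeff θ αθ : ℝ) := by nlinarith
      exact_mod_cast h3
    have hkZ : R.coeff θ αθ * k = 2 := by exact_mod_cast hkval
    have hkpos : 0 < k := by nlinarith
    have hcle : R.coeff θ αθ ≤ 2 := by nlinarith
    have hc12 : R.coeff θ αθ = 1 ∨ R.coeff θ αθ = 2 := by omega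
    rcases hc12 with h1 | h2
    · exfalso
      have hk2 : k = 2 := by rw [h1, one_mul] at hkZ; omega
      have hδ := R.reflClosed θ hθroots αθ hαθroots
      rw [hk, hk2] at hδ
      have hcast : ((2:ℤ):ℝ) = (2:ℝ) := by norm_num
      rw [hcast] at hδ
      have hδc := aux_coeff_sub_smul R hαθroots hθroots 2 hδ
      have hδαθ : (R.coeff (αθ - (2:ℝ) • θ) αθ : ℝ) = -1 := by
        rw [hδc αθ hαθPi, aux_simple_coeff R hαθPi αθ hαθPi, if_pos rfl]
        rw [h1]
        norm_num
      have hall : ∀ α ∈ R.simples, R.coeff (αθ - (2:ℝ) • θ) α ≤ 0 := by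
        rcases R.coeff_sign _ hδ with h' | h'
        · exfalso
          have h3 := h' αθ hαθPi
          have h4 : (0:ℝ) ≤ (R.coeff (αθ - (2:ℝ) • θ) αθ : ℝ) := by exact_mod_cast h3
          linarith
        · exact h'
      have hcomp := hdom _ (aux_neg R hδ)
      have hkey : ∀ α ∈ R.simples, α ≠ αθ → R.coeff θ α = 0 := by
        intro α hα hne
        have h3 := hcomp α hα
        rw [aux_coeff_neg R hδ α hα, hδc α hα, aux_simple_coeff R hαθPi α hα,
          if_neg hne] at h3
        have h4 := hθnn α hα
        have h5 : (R.coeff θ α : ℝ) ≤ 0 := by linarith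
        have h6 : R.coeff θ α ≤ 0 := by exact_mod_cast h5
        omega
      have hθeq : θ = αθ := by
        rw [aux_spec R hθroots,
          Finset.sum_eq_single_of_mem αθ hαθPi
            (fun β hβ hne => by rw [hkey β hβ hne]; norm_num),
          h1]
        norm_num
      rw [hθeq] at hp
      linarith
    · exact h2
  have hcθR : (R.coeff θ αθ : ℝ) = 2 := by exact_mod_cast hc2
  have hTA : ⟪θ, θ⟫_ℝ = ⟪αθ, αθ⟫_ℝ := by rw [hθθ, hcθR]; ring
  -- θ - αθ is a root
  have hγ₀mem : θ - (1:ℝ) • αθ ∈ R.roots := by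
    have h := R.reflClosed αθ hαθroots θ hθroots
    rwa [hfe] at h
  -- inner products of S₁ elements with αθ
  have hβval : ∀ β ∈ S₁, ⟪β, αθ⟫_ℝ = -(⟪αθ, αθ⟫_ℝ / 2) := by
    intro β hβ
    obtain ⟨hβPi, hβne, hβ0⟩ := (hS₁mem β).mp hβ
    have hβroots : β ∈ R.roots := R.simples_sub hβPi
    have hscβ := aux_simple_coeff R hβPi
    have hscα := aux_simple_coeff R hαθPi
    have hneg : ⟪β, αθ⟫_ℝ < 0 := by
      rcases lt_or_gt_of_ne hβ0 with h | h
      · exact h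
      exfalso
      obtain ⟨m, hm⟩ := R.crystal αθ hαθroots β hβroots
      have hmpos : (0:ℝ) < (m:ℝ) := by
        rw [← hm]; positivity
      have hδ := R.reflClosed αθ hαθroots β hβroots
      rw [hm] at hδ
      have hδc := aux_coeff_sub_smul R hβroots hαθroots (m:ℝ) hδ
      have e1 : (R.coeff (β - (m:ℝ) • αθ) β : ℝ) = 1 := by
        rw [hδc β hβPi, hscβ β hβPi, if_pos rfl, hscα β hβPi, if_neg hβne]
        ring
      have e2 : (R.coeff (β - (m:ℝ) • αθ) αθ : ℝ) = -(m:ℝ) := by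
        rw [hδc αθ hαθPi, hscβ αθ hαθPi, if_neg (Ne.symm hβne), hscα αθ hαθPi,
          if_pos rfl]
        ring
      rcases R.coeff_sign _ hδ with h' | h'
      · have h3 := h' αθ hαθPi
        have h4 : (0:ℝ) ≤ (R.coeff (β - (m:ℝ) • αθ) αθ : ℝ) := by exact_mod_cast h3
        linarith
      · have h3 := h' β hβPi
        have h4 : (R.coeff (β - (m:ℝ) • αθ) β : ℝ) ≤ 0 := by exact_mod_cast h3
        linarith
    obtain ⟨m, hm⟩ := R.crystal αθ hαθroots β hβroots
    have hmneg : (m:ℝ) < 0 := by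
      rw [← hm]
      exact div_neg_of_neg_of_pos (by linarith) hA
    have hmneg' : m < 0 := by exact_mod_cast hmneg
    have hm1 : m = -1 := by
      by_contra hm1
      have hmle2 : m ≤ -2 := by omega
      have hmle2' : (m:ℝ) ≤ -2 := by exact_mod_cast hmle2
      have hγγ : ⟪θ - (1:ℝ) • αθ, θ - (1:ℝ) • αθ⟫_ℝ = ⟪αθ, αθ⟫_ℝ := by
        simp only [one_smul]
        rw [real_inner_sub_sub_self, hTA, hp]
        ring
      have hβγ : ⟪β, θ - (1:ℝ) • αθ⟫_ℝ = -⟪β, αθ⟫_ℝ := by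
        rw [inner_sub_right, horth β hβPi hβne]
        simp [real_inner_smul_right]
      have hδ := R.reflClosed _ hγ₀mem β hβroots
      have hsc : 2 * ⟪β, θ - (1:ℝ) • αθ⟫_ℝ / ⟪θ - (1:ℝ) • αθ, θ - (1:ℝ) • αθ⟫_ℝ
          = -(m:ℝ) := by
        rw [hβγ, hγγ, ← hm]
        ring
      rw [hsc] at hδ
      have hγ₀c := aux_coeff_sub_smul R hθroots hαθroots 1 hγ₀mem
      have hδc := aux_coeff_sub_smul R hβroots hγ₀mem (-(m:ℝ)) hδ
      have eαθ : (R.coeff (β - (-(m:ℝ)) • (θ - (1:ℝ) • αθ)) αθ : ℝ) = (m:ℝ) := by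
        rw [hδc αθ hαθPi, hγ₀c αθ hαθPi, hscβ αθ hαθPi, if_neg (Ne.symm hβne),
          hscα αθ hαθPi, if_pos rfl, hcθR]
        ring
      have hcomp := hdom _ (aux_neg R hδ)
      have hm2 : (m:ℝ) = -2 := by
        have h3 := hcomp αθ hαθPi
        rw [aux_coeff_neg R hδ αθ hαθPi, eαθ, hcθR] at h3
        linarith
      have hother : ∀ α ∈ R.simples, α ≠ αθ → α ≠ β → R.coeff θ α = 0 := by
        intro α hα h1 h2
        have h3 := hcomp α hα
        rw [aux_coeff_neg R hδ α hα, hδc α hα, hγ₀c α hα, hscβ α hα, if_neg h2,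
          hscα α hα, if_neg h1, hm2] at h3
        have h4 := hθnn α hα
        have h5 : (R.coeff θ α : ℝ) ≤ 0 := by linarith
        have h6 : R.coeff θ α ≤ 0 := by exact_mod_cast h5
        omega
      have hβle : R.coeff θ β ≤ 1 := by
        have h3 := hcomp β hβPi
        rw [aux_coeff_neg R hδ β hβPi, hδc β hβPi, hγ₀c β hβPi, hscβ β hβPi,
          if_pos rfl, hscα β hβPi, if_neg hβne, hm2] at h3
        have h5 : (R.coeff θ β : ℝ) ≤ 1 := by linarith
        exact_mod_cast h5
      have hβαθ : ⟪β, αθ⟫_ℝ = -⟪αθ, αθ⟫_ℝ := by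
        rw [hm2] at hm
        field_simp at hm
        linarith
      have hpair : ({αθ, β} : Finset V) ⊆ R.simples := by
        intro x hx
        rcases Finset.mem_insert.mp hx with h | h
        · exact h ▸ hαθPi
        · exact (Finset.mem_singleton.mp h) ▸ hβPi
      have hsum : ⟪θ, αθ⟫_ℝ
          = (R.coeff θ αθ : ℝ) * ⟪αθ, αθ⟫_ℝ + (R.coeff θ β : ℝ) * ⟪β, αθ⟫_ℝ := by
        rw [aux_inner R hθroots αθ, ← Finset.sum_subset hpair (fun x hx hnx => ?_)]
        · rw [Finset.sum_pair (Ne.symm hβne)]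
        · have hx1 : x ≠ αθ := fun h => hnx (h ▸ Finset.mem_insert_self _ _)
          have hx2 : x ≠ β := fun h => hnx (by
            rw [h]; exact Finset.mem_insert_of_mem (Finset.mem_singleton_self β))
          rw [hother x hx hx1 hx2]
          norm_num
      rw [hp, hcθR, hβαθ] at hsum
      have h0 : 0 ≤ R.coeff θ β := hθnn β hβPi
      have hcases : R.coeff θ β = 0 ∨ R.coeff θ β = 1 := by omega
      rcases hcases with h | h <;> rw [h] at hsum <;> push_cast at hsum <;> linarith
    rw [hm1] at hm
    push_cast at hm
    field_simp at hm
    linarith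
  -- inner product with αθ in terms of degrees
  have hS₂Pi : insert αθ S₁ ⊆ R.simples := by
    intro x hx
    rcases Finset.mem_insert.mp hx with h | h
    exacts [h ▸ hαθPi, hS₁sub h]
  have hinner : ∀ γ ∈ R.roots,
      ⟪γ, αθ⟫_ℝ = (R.coeff γ αθ : ℝ) * ⟪αθ, αθ⟫_ℝ
        - (⟪αθ, αθ⟫_ℝ / 2) * ∑ β ∈ S₁, (R.coeff γ β : ℝ) := by
    intro γ hγ
    rw [aux_inner R hγ αθ, ← Finset.sum_subset hS₂Pi (fun x hx hnx => ?_)]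
    · rw [Finset.sum_insert hαθS₁]
      have h1 : ∑ β ∈ S₁, (R.coeff γ β : ℝ) * ⟪β, αθ⟫_ℝ
          = ∑ β ∈ S₁, (-(⟪αθ, αθ⟫_ℝ / 2)) * (R.coeff γ β : ℝ) := by
        refine Finset.sum_congr rfl fun β hβ => ?_
        rw [hβval β hβ]; ring
      rw [h1, ← Finset.mul_sum]; ring
    · have hx1 : x ≠ αθ := fun h => hnx (h ▸ Finset.mem_insert_self _ _)
      have hx2 : x ∉ S₁ := fun h => hnx (Finset.mem_insert_of_mem h)
      have h0 : ⟪x, αθ⟫_ℝ = 0 := by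
        by_contra h
        exact hx2 ((hS₁mem x).mpr ⟨hx, hx1, h⟩)
      rw [h0, mul_zero]
  -- degrees of θ
  have hdeg1 : R.degS S₁ θ = 3 := by
    have h := hinner θ hθroots
    rw [hp, hcθR] at h
    have hD : ⟪αθ, αθ⟫_ℝ * (∑ β ∈ S₁, (R.coeff θ β : ℝ)) = ⟪αθ, αθ⟫_ℝ * 3 := by
      ring_nf at h ⊢
      linarith
    have hD2 := mul_left_cancel₀ (ne_of_gt hA) hD
    have : ((R.degS S₁ θ : ℤ) : ℝ) = 3 := by
      rw [RootSystemData.degS]; push_cast; exact hD2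
    exact_mod_cast this
  have hdegsplit : ∀ γ : V, R.degS S₂ γ = R.coeff γ αθ + R.degS S₁ γ := by
    intro γ
    rw [RootSystemData.degS, RootSystemData.degS, hS₂fin, Finset.sum_insert hαθS₁]
  have hdeg2 : R.degS S₂ θ = 5 := by
    rw [hdegsplit, hc2, hdeg1]
    norm_num
  -- key lemma: positive roots with αθ-coefficient 2 equal θ
  have hLem : ∀ δ ∈ R.posRoots, R.coeff δ αθ = 2 → δ = θ := by
    intro δ hδp h2
    obtain ⟨hδroots, hδnn⟩ := hδp
    have h2R : (R.coeff δ αθ : ℝ) = 2 := by exact_mod_cast h2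
    have hsc : 2 * ⟪δ, θ⟫_ℝ / ⟪θ, θ⟫_ℝ = (2:ℝ) := by
      rw [hiθ δ hδroots, hTA, h2R]
      field_simp
    have hη := R.reflClosed θ hθroots δ hδroots
    rw [hsc] at hη
    have hηc := aux_coeff_sub_smul R hδroots hθroots 2 hη
    have hηαθ : (R.coeff (δ - (2:ℝ) • θ) αθ : ℝ) = -2 := by
      rw [hηc αθ hαθPi, h2R, hcθR]
      ring
    have hcomp := hdom _ (aux_neg R hη)
    have hge : ∀ α ∈ R.simples, (R.coeff θ α : ℝ) ≤ (R.coeff δ α : ℝ) := by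
      intro α hα
      have h3 := hcomp α hα
      rw [aux_coeff_neg R hη α hα, hηc α hα] at h3
      linarith
    rw [aux_spec R hδroots, aux_spec R hθroots]
    exact Finset.sum_congr rfl fun α hα => by
      rw [le_antisymm (hdom δ hδroots α hα) (hge α hα)]
  -- no positive root with αθ-coefficient 0 and S₁-degree 2
  have hnot02 : ∀ γ ∈ R.posRoots, R.coeff γ αθ = 0 → R.degS S₁ γ = 2 → False := by
    intro γ hγp h0 hsum2
    obtain ⟨hγroots, hγnn⟩ := hγp
    have h0R : (R.coeff γ αθ : ℝ) = 0 := by exact_mod_cast h0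
    have hsumR : (∑ β ∈ S₁, (R.coeff γ β : ℝ)) = 2 := by
      have := congrArg (fun z : ℤ => (z : ℝ)) hsum2
      push_cast at this
      simpa [RootSystemData.degS] using this
    have hsc : 2 * ⟪γ, αθ⟫_ℝ / ⟪αθ, αθ⟫_ℝ = (-2:ℝ) := by
      rw [hinner γ hγroots, h0R, hsumR]
      field_simp
      norm_num
    have hδ := R.reflClosed αθ hαθroots γ hγroots
    rw [hsc] at hδ
    have hδc := aux_coeff_sub_smul R hγroots hαθroots (-2:ℝ) hδ
    have hδαθ : (R.coeff (γ - (-2:ℝ) • αθ) αθ : ℝ) = 2 := by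
      rw [hδc αθ hαθPi, aux_simple_coeff R hαθPi αθ hαθPi, if_pos rfl, h0R]
      ring
    have hδ2 : R.coeff (γ - (-2:ℝ) • αθ) αθ = 2 := by exact_mod_cast hδαθ
    have hδpos : γ - (-2:ℝ) • αθ ∈ R.posRoots := by
      refine ⟨hδ, ?_⟩
      rcases R.coeff_sign _ hδ with h' | h'
      · exact h'
      · exfalso
        have h3 := h' αθ hαθPi
        omega
    have hθeq := hLem _ hδpos hδ2
    have h3' : ∑ β ∈ S₁, (R.coeff (γ - (-2:ℝ) • αθ) β : ℝ) = 3 := by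
      have : ((R.degS S₁ (γ - (-2:ℝ) • αθ) : ℤ) : ℝ) = 3 := by
        rw [hθeq, hdeg1]; norm_num
      rw [RootSystemData.degS] at this
      push_cast at this
      exact this
    have h2' : ∑ β ∈ S₁, (R.coeff (γ - (-2:ℝ) • αθ) β : ℝ) = 2 := by
      rw [Finset.sum_congr rfl (fun β hβ => ?_)]
      · exact hsumR
      obtain ⟨hβPi, hβne, -⟩ := (hS₁mem β).mp hβ
      rw [hδc β hβPi, aux_simple_coeff R hαθPi β hβPi, if_neg hβne]
      ring
    rw [h2'] at h3'
    norm_num at h3'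
  refine ⟨?_, hdeg1, hdeg2, ?_⟩
  · intro h
    rw [h, hS₂fin] at hαθS₁
    exact hαθS₁ (Finset.mem_insert_self αθ S₁)
  · ext γ
    simp only [Set.mem_setOf_eq]
    constructor
    · rintro ⟨hγp, h2⟩
      refine ⟨hγp, ?_⟩
      rw [hdegsplit]
      have ha0 : 0 ≤ R.coeff γ αθ := hγp.2 αθ hαθPi
      have hb : R.degS S₁ γ ≤ 3 := by
        rw [← hdeg1]
        refine Finset.sum_le_sum fun β hβ => ?_
        exact_mod_cast hdom γ hγp.1 β (hS₁sub hβ)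
      have hx : ¬(R.coeff γ αθ = 0 ∧ R.degS S₁ γ = 2) := by
        rintro ⟨u, v⟩
        exact hnot02 γ hγp u v
      omega
    · rintro ⟨hγp, h3⟩
      refine ⟨hγp, ?_⟩
      rw [hdegsplit] at h3
      have ha2 : R.coeff γ αθ ≤ 2 := by
        have h4 := hdom γ hγp.1 αθ hαθPi
        rw [hcθR] at h4
        exact_mod_cast h4
      have hb0 : 0 ≤ R.degS S₁ γ :=
        Finset.sum_nonneg fun β hβ => hγp.2 β (hS₁sub hβ)
      have hy : ¬(R.coeff γ αθ = 2 ∧ R.degS S₁ γ = 1) := by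
        rintro ⟨u, v⟩
        rw [hLem γ hγp u] at v
        omega
      omega
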